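/- arXiv:2602.15773 — 2 statements merged into one kernel-verified Lean document; each statement's English description precedes it below -/
import Mathlib

section
/- Let V be a finite type and MF : Finset V → Finset V → ℝ be monotone in each argument (removing an element of the source set or sink set does not increase MF). Define PF u S T as MF S T − MF (S \ {u}) T when u ∈ S and MF S T − MF S (T \ {u}) when u ∈ T. Then for disjoint S T : Finset V, s ∈ S, and t ∈ T: (1) PF t (S \ {s}) T ≥ PF t S T − PF s S T, and (2) PF s S (T \ {t}) ≥ PF s S T − PF t S T. -/
/-- Peeling flow: the decrease in maximum-flow value when `u` is removed from `S ∪ T`. -/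
noncomputable def PF {V : Type*} [DecidableEq V]
    (MF : Finset V → Finset V → ℝ) (u : V) (S T : Finset V) : ℝ :=
  if u ∈ S then MF S T - MF (S \ {u}) T else MF S T - MF S (T \ {u})

theorem peeling_flow_lower_bounds {V : Type*} [Fintype V] [DecidableEq V]
    (MF : Finset V → Finset V → ℝ)
    (hmonoS : ∀ (S T : Finset V), ∀ u ∈ S, MF (S \ {u}) T ≤ MF S T)
    (hmonoT : ∀ (S T : Finset V), ∀ u ∈ T, MF S (T \ {u}) ≤ MF S T)
    (S T : Finset V) (hdisj : Disjoint S T) (s : V) (hs : s ∈ S) (t : V) (ht : t ∈ T) :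
    PF MF t (S \ {s}) T ≥ PF MF t S T - PF MF s S T ∧
    PF MF s S (T \ {t}) ≥ PF MF s S T - PF MF t S T := by
  have htS : t ∉ S := fun h => (Finset.disjoint_left.mp hdisj h) ht
  have hsT : s ∉ T := fun h => Finset.disjoint_left.mp hdisj hs h
  have htS' : t ∉ S \ {s} := fun h => htS (Finset.mem_sdiff.mp h).1
  have hsT' : s ∉ T \ {t} := fun h => hsT (Finset.mem_sdiff.mp h).1
  have key := hmonoS S (T \ {t}) s hs
  have key2 := hmonoT (S \ {s}) T t ht
  simp only [PF, if_pos hs, if_neg htS, if_neg htS', if_neg hsT']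
  constructor <;> linarith
end

section
/- Let V be a finite type, MF : Finset V → Finset V → ℝ, and let (S₁, T₁), (S₂, T₂) be two component pairs such that MF is additive across them: for all S₁' ⊆ S₁, T₁' ⊆ T₁, S₂' ⊆ S₂, T₂' ⊆ T₂ (with S₁ ∩ S₂ = ∅ and T₁ ∩ T₂ = ∅), MF (S₁' ∪ S₂') (T₁' ∪ T₂') = MF S₁' T₁' + MF S₂' T₂'. Define DF₁ k = sup over subsets S' ⊆ S₁, T' ⊆ T₁ with |S'| + |T'| = k of MF S' T', and define DF₂ analogously. Then the densest-flow array of the union satisfies, for every k: sup over S' ⊆ S₁ ∪ S₂, T' ⊆ T₁ ∪ T₂ with |S'| + |T'| = k of MF S' T' = max over k₁ + k₂ = k (with k₁ ≤ |S₁| + |T₁|, k₂ ≤ |S₂| + |T₂|) of DF₁ k₁ + DF₂ k₂. -/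
/-- Densest-flow array: `DF MF S T k` is the best flow value achievable by
subsets `S' ⊆ S`, `T' ⊆ T` of combined size exactly `k`. -/
noncomputable def DF {V : Type*} [DecidableEq V]
    (MF : Finset V → Finset V → ℝ) (S T : Finset V) (k : ℕ) : ℝ :=
  sSup {x : ℝ | ∃ S' ⊆ S, ∃ T' ⊆ T, S'.card + T'.card = k ∧ x = MF S' T'}

lemma df_set_finite {V : Type*} [DecidableEq V] [Fintype V]
    (MF : Finset V → Finset V → ℝ) (S T : Finset V) (k : ℕ) :
    {x : ℝ | ∃ S' ⊆ S, ∃ T' ⊆ T, S'.card + T'.card = k ∧ x = MF S' T'}.Finite := by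
  apply Set.Finite.subset (Set.finite_range fun p : Finset V × Finset V => MF p.1 p.2)
  rintro x ⟨S', _, T', _, _, rfl⟩
  exact ⟨(S', T'), rfl⟩

lemma df_set_nonempty {V : Type*} [DecidableEq V]
    (MF : Finset V → Finset V → ℝ) (S T : Finset V) (k : ℕ) (h : k ≤ S.card + T.card) :
    {x : ℝ | ∃ S' ⊆ S, ∃ T' ⊆ T, S'.card + T'.card = k ∧ x = MF S' T'}.Nonempty := by
  obtain ⟨S', hS', hcS⟩ := Finset.exists_subset_card_eq (s := S) (n := min k S.card) (min_le_right _ _)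
  obtain ⟨T', hT', hcT⟩ := Finset.exists_subset_card_eq (s := T) (n := k - min k S.card) (by omega)
  exact ⟨MF S' T', S', hS', T', hT', by omega, rfl⟩

lemma df_le {V : Type*} [DecidableEq V] [Fintype V]
    (MF : Finset V → Finset V → ℝ) (S T : Finset V) {S' T' : Finset V}
    (hS' : S' ⊆ S) (hT' : T' ⊆ T) :
    MF S' T' ≤ DF MF S T (S'.card + T'.card) :=
  le_csSup ((df_set_finite MF S T _).bddAbove) ⟨S', hS', T', hT', rfl, rfl⟩

lemma df_attained {V : Type*} [DecidableEq V] [Fintype V]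
    (MF : Finset V → Finset V → ℝ) (S T : Finset V) (k : ℕ) (h : k ≤ S.card + T.card) :
    ∃ S' ⊆ S, ∃ T' ⊆ T, S'.card + T'.card = k ∧ DF MF S T k = MF S' T' :=
  (df_set_nonempty MF S T k h).csSup_mem (df_set_finite MF S T k)

theorem densest_flow_merge_correct {V : Type*} [Fintype V] [DecidableEq V]
    (MF : Finset V → Finset V → ℝ)
    (S₁ T₁ S₂ T₂ : Finset V)
    (hS : Disjoint S₁ S₂) (hT : Disjoint T₁ T₂)
    (hadd : ∀ S₁' ⊆ S₁, ∀ T₁' ⊆ T₁, ∀ S₂' ⊆ S₂, ∀ T₂' ⊆ T₂,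
      MF (S₁' ∪ S₂') (T₁' ∪ T₂') = MF S₁' T₁' + MF S₂' T₂') :
    ∀ k : ℕ,
      DF MF (S₁ ∪ S₂) (T₁ ∪ T₂) k =
      sSup {x : ℝ | ∃ k₁ k₂, k₁ + k₂ = k ∧ k₁ ≤ S₁.card + T₁.card ∧
        k₂ ≤ S₂.card + T₂.card ∧ x = DF MF S₁ T₁ k₁ + DF MF S₂ T₂ k₂} := by
  intro k
  have hcS : (S₁ ∪ S₂).card = S₁.card + S₂.card := Finset.card_union_of_disjoint hS
  have hcT : (T₁ ∪ T₂).card = T₁.card + T₂.card := Finset.card_union_of_disjoint hT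
  set A : Set ℝ :=
    {x : ℝ | ∃ S' ⊆ S₁ ∪ S₂, ∃ T' ⊆ T₁ ∪ T₂, S'.card + T'.card = k ∧ x = MF S' T'} with hA
  set B : Set ℝ :=
    {x : ℝ | ∃ k₁ k₂, k₁ + k₂ = k ∧ k₁ ≤ S₁.card + T₁.card ∧
      k₂ ≤ S₂.card + T₂.card ∧ x = DF MF S₁ T₁ k₁ + DF MF S₂ T₂ k₂} with hB
  have hAfin : A.Finite := df_set_finite MF _ _ _
  have hBfin : B.Finite := by
    apply Set.Finite.subset
      ((Set.finite_Iic k).image fun k₁ => DF MF S₁ T₁ k₁ + DF MF S₂ T₂ (k - k₁))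
    rintro x ⟨k₁, k₂, hk, h₁, h₂, rfl⟩
    exact ⟨k₁, Set.mem_Iic.mpr (by omega), by simp only; rw [show k - k₁ = k₂ by omega]⟩
  by_cases hk : k ≤ S₁.card + T₁.card + S₂.card + T₂.card
  · -- both nonempty, prove antisymm
    have hAne : A.Nonempty := df_set_nonempty MF _ _ _ (by omega)
    have hBne : B.Nonempty := by
      refine ⟨_, min k (S₁.card + T₁.card), k - min k (S₁.card + T₁.card),
        by omega, min_le_right _ _, by omega, rfl⟩
    show sSup A = sSup B
    apply le_antisymm
    · apply csSup_le hAne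
      rintro x ⟨S', hS', T', hT', hcard, rfl⟩
      have eS : S' = (S' ∩ S₁) ∪ (S' ∩ S₂) := by
        rw [← Finset.inter_union_distrib_left, Finset.inter_eq_left.mpr hS']
      have eT : T' = (T' ∩ T₁) ∪ (T' ∩ T₂) := by
        rw [← Finset.inter_union_distrib_left, Finset.inter_eq_left.mpr hT']
      have hdS : Disjoint (S' ∩ S₁) (S' ∩ S₂) :=
        hS.mono Finset.inter_subset_right Finset.inter_subset_right
      have hdT : Disjoint (T' ∩ T₁) (T' ∩ T₂) :=
        hT.mono Finset.inter_subset_right Finset.inter_subset_right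
      have hval : MF S' T' = MF (S' ∩ S₁) (T' ∩ T₁) + MF (S' ∩ S₂) (T' ∩ T₂) := by
        conv_lhs => rw [eS, eT]
        exact hadd _ Finset.inter_subset_right _ Finset.inter_subset_right
          _ Finset.inter_subset_right _ Finset.inter_subset_right
      have hc1 : S'.card = (S' ∩ S₁).card + (S' ∩ S₂).card := by
        conv_lhs => rw [eS]
        exact Finset.card_union_of_disjoint hdS
      have hc2 : T'.card = (T' ∩ T₁).card + (T' ∩ T₂).card := by
        conv_lhs => rw [eT]
        exact Finset.card_union_of_disjoint hdT
      have h1 : MF (S' ∩ S₁) (T' ∩ T₁) ≤ DF MF S₁ T₁ ((S' ∩ S₁).card + (T' ∩ T₁).card) :=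
        df_le MF S₁ T₁ Finset.inter_subset_right Finset.inter_subset_right
      have h2 : MF (S' ∩ S₂) (T' ∩ T₂) ≤ DF MF S₂ T₂ ((S' ∩ S₂).card + (T' ∩ T₂).card) :=
        df_le MF S₂ T₂ Finset.inter_subset_right Finset.inter_subset_right
      have hmem : DF MF S₁ T₁ ((S' ∩ S₁).card + (T' ∩ T₁).card)
          + DF MF S₂ T₂ ((S' ∩ S₂).card + (T' ∩ T₂).card) ∈ B := by
        refine ⟨_, _, by omega, ?_, ?_, rfl⟩
        · have := Finset.card_le_card ((Finset.inter_subset_right : S' ∩ S₁ ⊆ S₁))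
          have := Finset.card_le_card ((Finset.inter_subset_right : T' ∩ T₁ ⊆ T₁))
          omega
        · have := Finset.card_le_card ((Finset.inter_subset_right : S' ∩ S₂ ⊆ S₂))
          have := Finset.card_le_card ((Finset.inter_subset_right : T' ∩ T₂ ⊆ T₂))
          omega
      calc MF S' T' ≤ _ + _ := hval ▸ add_le_add h1 h2
        _ ≤ sSup B := le_csSup hBfin.bddAbove hmem
    · apply csSup_le hBne
      rintro x ⟨k₁, k₂, hk12, h₁, h₂, rfl⟩
      obtain ⟨S₁', hS₁', T₁', hT₁', hc₁, he₁⟩ := df_attained MF S₁ T₁ k₁ h₁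
      obtain ⟨S₂', hS₂', T₂', hT₂', hc₂, he₂⟩ := df_attained MF S₂ T₂ k₂ h₂
      rw [he₁, he₂, ← hadd _ hS₁' _ hT₁' _ hS₂' _ hT₂']
      apply le_csSup hAfin.bddAbove
      refine ⟨S₁' ∪ S₂', Finset.union_subset_union hS₁' hS₂',
        T₁' ∪ T₂', Finset.union_subset_union hT₁' hT₂', ?_, rfl⟩
      rw [Finset.card_union_of_disjoint (hS.mono hS₁' hS₂'),
        Finset.card_union_of_disjoint (hT.mono hT₁' hT₂')]
      omega
  · -- both empty
    have hAe : A = ∅ := by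
      ext x
      simp only [Set.mem_empty_iff_false, iff_false, hA, Set.mem_setOf_eq]
      rintro ⟨S', hS', T', hT', hcard, rfl⟩
      have := Finset.card_le_card hS'
      have := Finset.card_le_card hT'
      omega
    have hBe : B = ∅ := by
      ext x
      simp only [Set.mem_empty_iff_false, iff_false, hB, Set.mem_setOf_eq]
      rintro ⟨k₁, k₂, h1, h2, h3, rfl⟩
      omega
    show sSup A = sSup B
    rw [hAe, hBe]
end
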